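/- arXiv:1712.08467 — 2 statements merged into one kernel-verified Lean document; each statement's English description precedes it below -/
import Mathlib

section
/- Let T_1, ..., T_M be distinct positive reals, M ≥ 2, and r > 0 the unique positive root of ∑_k x^{-T_k} = 1. Then for every probability distribution Q = (Q_1, ..., Q_M) with all Q_k > 0, the time-scaled entropy satisfies H(Q)/(∑_k Q_k T_k) ≤ log₂ r, with equality if and only if Q_k = r^{-T_k} for all k. -/
/-- For every probability distribution Q with positive entries,
H(Q)/(∑ Q_k T_k) ≤ log₂ r, with equality iff Q_k = r^{-T_k} for all k. -/
theorem stmt3 (M : ℕ) (hM : 2 ≤ M) (T : Fin M → ℝ)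
    (hTpos : ∀ k, 0 < T k) (hTinj : Function.Injective T)
    (r : ℝ) (hr : 0 < r) (hroot : ∑ k, r ^ (-(T k)) = 1)
    (Q : Fin M → ℝ) (hQpos : ∀ k, 0 < Q k) (hQsum : ∑ k, Q k = 1) :
    (-∑ k, Q k * Real.logb 2 (Q k)) / (∑ k, Q k * T k) ≤ Real.logb 2 r ∧
    ((-∑ k, Q k * Real.logb 2 (Q k)) / (∑ k, Q k * T k) = Real.logb 2 r ↔
      ∀ k, Q k = r ^ (-(T k))) := by
  set P : Fin M → ℝ := fun k => r ^ (-(T k)) with hP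
  have hPpos : ∀ k, 0 < P k := fun k => Real.rpow_pos_of_pos hr _
  have : Nonempty (Fin M) := ⟨⟨0, by omega⟩⟩
  have hS : 0 < ∑ k, Q k * T k := by
    apply Finset.sum_pos
    · intro k _; exact mul_pos (hQpos k) (hTpos k)
    · exact Finset.univ_nonempty
  have key : ∀ k, Q k * Real.log (P k / Q k) ≤ P k - Q k := by
    intro k
    have hx : 0 < P k / Q k := div_pos (hPpos k) (hQpos k)
    have h1 := Real.log_le_sub_one_of_pos hx
    calc Q k * Real.log (P k / Q k) ≤ Q k * (P k / Q k - 1) :=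
          mul_le_mul_of_nonneg_left h1 (hQpos k).le
      _ = P k - Q k := by rw [mul_sub, mul_div_cancel₀ _ (hQpos k).ne', mul_one]
  have hsum0 : ∑ k, (P k - Q k) = 0 := by
    rw [Finset.sum_sub_distrib, hQsum]
    rw [show ∑ k, P k = 1 from hroot]
    ring
  have hlog2 : (0:ℝ) < Real.log 2 := Real.log_pos one_lt_two
  have ident : (-∑ k, Q k * Real.logb 2 (Q k)) - (∑ k, Q k * T k) * Real.logb 2 r
      = (∑ k, Q k * Real.log (P k / Q k)) / Real.log 2 := by
    have h : ∀ k ∈ Finset.univ, Q k * Real.log (P k / Q k)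
        = -(Q k * Real.log (Q k)) - (Q k * T k) * Real.log r := by
      intro k _
      rw [Real.log_div (hPpos k).ne' (hQpos k).ne', hP, Real.log_rpow hr]
      ring
    rw [Finset.sum_congr rfl h, Finset.sum_sub_distrib]
    simp only [Real.logb, Finset.sum_neg_distrib, ← Finset.sum_mul,
      ← Finset.sum_div]
    field_simp
    rw [← Finset.sum_div, mul_div_cancel₀ _ hlog2.ne']
  have gibbs : ∑ k, Q k * Real.log (P k / Q k) ≤ 0 :=
    (Finset.sum_le_sum fun k _ => key k).trans_eq hsum0
  have hle : (-∑ k, Q k * Real.logb 2 (Q k)) ≤ (∑ k, Q k * T k) * Real.logb 2 r := by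
    have := div_nonpos_of_nonpos_of_nonneg gibbs hlog2.le
    linarith [ident]
  constructor
  · rw [div_le_iff₀ hS]; linarith
  · constructor
    · intro heq
      have heq' : (-∑ k, Q k * Real.logb 2 (Q k)) = (∑ k, Q k * T k) * Real.logb 2 r := by
        field_simp at heq
        linarith [heq]
      have hzero : ∑ k, Q k * Real.log (P k / Q k) = 0 := by
        have : (∑ k, Q k * Real.log (P k / Q k)) / Real.log 2 = 0 := by
          rw [← ident]; linarith
        field_simp at this
        simpa using this
      have hterm : ∀ k ∈ Finset.univ, (P k - Q k) - Q k * Real.log (P k / Q k) = 0 := by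
        apply (Finset.sum_eq_zero_iff_of_nonneg (fun k _ => sub_nonneg.mpr (key k))).mp
        rw [Finset.sum_sub_distrib, hsum0, hzero]
        ring
      intro k
      have hk := hterm k (Finset.mem_univ k)
      by_contra hne
      have hx : 0 < P k / Q k := div_pos (hPpos k) (hQpos k)
      have hx1 : P k / Q k ≠ 1 := by
        intro h1
        exact hne (by rw [div_eq_one_iff_eq (hQpos k).ne'] at h1; exact h1.symm)
      have := Real.log_lt_sub_one_of_pos hx hx1
      have h2 : Q k * Real.log (P k / Q k) < Q k * (P k / Q k - 1) :=
        mul_lt_mul_of_pos_left this (hQpos k)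
      have h3 : Q k * (P k / Q k - 1) = P k - Q k := by
        rw [mul_sub, mul_div_cancel₀ _ (hQpos k).ne', mul_one]
      linarith
    · intro hQP
      have hzero : ∑ k, Q k * Real.log (P k / Q k) = 0 := by
        apply Finset.sum_eq_zero
        intro k _
        rw [hQP k]
        simp [div_self (hPpos k).ne']
        exact Or.inr (Or.inr (Or.inl (div_self (hPpos k).ne')))
      have : (-∑ k, Q k * Real.logb 2 (Q k)) = (∑ k, Q k * T k) * Real.logb 2 r := by
        have := ident
        rw [hzero] at this
        simp at this
        linarith
      rw [this]
      exact mul_div_cancel_left₀ _ hS.ne'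
end

section
/- Fix distinct positive reals T_1, ..., T_M, M ≥ 2. For θ ∈ ℝ define g(θ) = θ/ln 2 + log₂(ξ(θ)) / (∑_k P_k(θ) T_k), where ξ(θ) = ∑_k exp(-θ T_k) and P_k(θ) = exp(-θ T_k)/ξ(θ). Then g'(θ) = 0 if and only if ξ(θ) = 1. -/
/-- For g(θ) = θ/ln 2 + log₂(ξ(θ)) / (∑_k P_k(θ) T_k), with
ξ(θ) = ∑_k exp(-θ T_k) and P_k(θ) = exp(-θ T_k)/ξ(θ), the derivative of g at θ
vanishes iff ξ(θ) = 1. -/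
theorem stmt5 (M : ℕ) (hM : 2 ≤ M) (T : Fin M → ℝ)
    (hTpos : ∀ k, 0 < T k) (hTinj : Function.Injective T)
    (g : ℝ → ℝ)
    (hg : ∀ t : ℝ, g t = t / Real.log 2 +
      Real.logb 2 (∑ k, Real.exp (-t * T k)) /
        (∑ k, (Real.exp (-t * T k) / (∑ j, Real.exp (-t * T j))) * T k))
    (θ d : ℝ) (hd : HasDerivAt g d θ) :
    d = 0 ↔ (∑ k, Real.exp (-θ * T k)) = 1 := by
  have hMne : Nonempty (Fin M) := ⟨⟨0, by omega⟩⟩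
  set ξ : ℝ → ℝ := fun t => ∑ k, Real.exp (-t * T k) with hξdef
  set S : ℝ → ℝ := fun t => ∑ k, Real.exp (-t * T k) * T k with hSdef
  have hξpos : ∀ t, 0 < ξ t := fun t =>
    Finset.sum_pos (fun k _ => Real.exp_pos _) Finset.univ_nonempty
  have hSpos : ∀ t, 0 < S t := fun t =>
    Finset.sum_pos (fun k _ => mul_pos (Real.exp_pos _) (hTpos k)) Finset.univ_nonempty
  have hlog2 : Real.log 2 ≠ 0 := ne_of_gt (Real.log_pos one_lt_two)
  have hg2 : g = fun t => (t + Real.log (ξ t) * ξ t / S t) / Real.log 2 := by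
    funext t
    rw [hg t]
    have h1 : (∑ k, (Real.exp (-t * T k) / (∑ j, Real.exp (-t * T j))) * T k) = S t / ξ t := by
      simp only [div_mul_eq_mul_div, ← Finset.sum_div, hSdef, hξdef]
    rw [h1, Real.logb]
    field_simp
    rw [show (∑ x : Fin M, Real.exp (-(t * T x))) = ξ t by
      rw [hξdef]; exact Finset.sum_congr rfl fun x _ => by rw [neg_mul]]
    ring
  set Q : ℝ := ∑ k, Real.exp (-θ * T k) * (T k) ^ 2 with hQdef
  have hQpos : 0 < Q :=
    Finset.sum_pos (fun k _ => mul_pos (Real.exp_pos _) (pow_pos (hTpos k) 2))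
      Finset.univ_nonempty
  have hE : ∀ k : Fin M, HasDerivAt (fun t => Real.exp (-t * T k))
      (Real.exp (-θ * T k) * (-1 * T k)) θ := by
    intro k
    exact (((hasDerivAt_id θ).neg.mul_const (T k)).exp)
  have hξ' : HasDerivAt ξ (-S θ) θ := by
    have h := HasDerivAt.fun_sum (fun k (_ : k ∈ Finset.univ) => hE k)
    refine h.congr_deriv ?_
    simp [hSdef, ← Finset.sum_neg_distrib]
  have hS' : HasDerivAt S (-Q) θ := by
    have h := HasDerivAt.fun_sum (fun k (_ : k ∈ Finset.univ) => (hE k).mul_const (T k))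
    refine h.congr_deriv ?_
    rw [hQdef, ← Finset.sum_neg_distrib]
    apply Finset.sum_congr rfl
    intros; ring
  have hlog : HasDerivAt (fun t => Real.log (ξ t)) (-S θ / ξ θ) θ :=
    hξ'.log (ne_of_gt (hξpos θ))
  have hnum : HasDerivAt (fun t => Real.log (ξ t) * ξ t)
      (-S θ / ξ θ * ξ θ + Real.log (ξ θ) * -S θ) θ := hlog.mul hξ'
  have hh : HasDerivAt (fun t => Real.log (ξ t) * ξ t / S t)
      (((-S θ / ξ θ * ξ θ + Real.log (ξ θ) * -S θ) * S θ -
        Real.log (ξ θ) * ξ θ * -Q) / S θ ^ 2) θ :=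
    hnum.div hS' (ne_of_gt (hSpos θ))
  have hg' : HasDerivAt g
      ((1 + ((-S θ / ξ θ * ξ θ + Real.log (ξ θ) * -S θ) * S θ -
        Real.log (ξ θ) * ξ θ * -Q) / S θ ^ 2) / Real.log 2) θ := by
    rw [hg2]
    exact ((hasDerivAt_id θ).add hh).div_const _
  have hdval : d = Real.log (ξ θ) * ((ξ θ * Q - S θ ^ 2) / (S θ ^ 2 * Real.log 2)) := by
    rw [hd.unique hg']
    have h1 : ξ θ ≠ 0 := ne_of_gt (hξpos θ)
    have h2 : S θ ≠ 0 := ne_of_gt (hSpos θ)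
    field_simp
    ring
  -- Cauchy-Schwarz: S θ ^ 2 < ξ θ * Q
  have key : ∑ j, ∑ k, Real.exp (-θ * T j) * Real.exp (-θ * T k) * (T j - T k) ^ 2
      = Q * ξ θ + ξ θ * Q - 2 * (S θ * S θ) := by
    rw [hξdef, hSdef, hQdef, Finset.sum_mul_sum, Finset.sum_mul_sum, Finset.sum_mul_sum,
      Finset.mul_sum, ← Finset.sum_add_distrib, ← Finset.sum_sub_distrib]
    refine Finset.sum_congr rfl fun j _ => ?_
    rw [Finset.mul_sum, ← Finset.sum_add_distrib, ← Finset.sum_sub_distrib]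
    refine Finset.sum_congr rfl fun k _ => ?_
    ring
  have hdpos : 0 < ∑ j, ∑ k, Real.exp (-θ * T j) * Real.exp (-θ * T k) * (T j - T k) ^ 2 := by
    have j0 : Fin M := ⟨0, by omega⟩
    have j1 : Fin M := ⟨1, by omega⟩
    refine Finset.sum_pos' (fun j _ => Finset.sum_nonneg fun k _ =>
      mul_nonneg (mul_nonneg (Real.exp_pos _).le (Real.exp_pos _).le) (sq_nonneg _))
      ⟨⟨0, by omega⟩, Finset.mem_univ _, ?_⟩
    refine Finset.sum_pos' (fun k _ =>
      mul_nonneg (mul_nonneg (Real.exp_pos _).le (Real.exp_pos _).le) (sq_nonneg _))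
      ⟨⟨1, by omega⟩, Finset.mem_univ _, ?_⟩
    have hne : T ⟨0, by omega⟩ ≠ T ⟨1, by omega⟩ := by
      intro h; exact absurd (hTinj h) (by simp [Fin.ext_iff])
    have hsq : (0:ℝ) < (T ⟨0, by omega⟩ - T ⟨1, by omega⟩) ^ 2 := by
      have := sub_ne_zero.mpr hne
      exact pow_pos (abs_pos.mpr this) 2 |>.trans_eq (by rw [sq_abs])
    exact mul_pos (mul_pos (Real.exp_pos _) (Real.exp_pos _)) hsq
  have hCS : S θ ^ 2 < ξ θ * Q := by nlinarith [key, hdpos]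
  have hCpos : 0 < (ξ θ * Q - S θ ^ 2) / (S θ ^ 2 * Real.log 2) :=
    div_pos (sub_pos.mpr hCS) (mul_pos (pow_pos (hSpos θ) 2) (Real.log_pos one_lt_two))
  rw [hdval, mul_eq_zero]
  constructor
  · rintro (h | h)
    · rcases Real.log_eq_zero.mp h with h' | h' | h'
      · exact absurd h' (ne_of_gt (hξpos θ))
      · exact h'
      · exact absurd h' (by linarith [hξpos θ])
    · exact absurd h (ne_of_gt hCpos)
  · intro h
    left
    show Real.log (∑ k, Real.exp (-θ * T k)) = 0
    rw [h, Real.log_one]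
end
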